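/- In the ai-semiring B₂¹, the word xyxztz is an isoterm: if u is any word with u ⪯ xyxztz in B₂¹ (i.e., B₂¹ satisfies u + xyxztz ≈ xyxztz), then u = xyxztz. -/

import Mathlib

/-- The six-element Brandt monoid `B₂¹`: `z = 0`, `e = 1`, `a = E₁₂`,
`b = E₂₁`, `ab = E₁₁`, `ba = E₂₂`. -/
inductive B : Type
  | z | e | a | b | ab | ba
deriving DecidableEq

/-- Multiplication of `B₂¹` (multiplication of `2×2` matrix units). -/
def bmul : B → B → B
  | B.z, _ => B.z
  | _, B.z => B.z
  | B.e, x => x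
  | x, B.e => x
  | B.a, B.b => B.ab
  | B.b, B.a => B.ba
  | B.a, B.ba => B.a
  | B.ab, B.a => B.a
  | B.b, B.ab => B.b
  | B.ba, B.b => B.b
  | B.ab, B.ab => B.ab
  | B.ba, B.ba => B.ba
  | _, _ => B.z

/-- Addition of `B₂¹`, determined by the semilattice order with `1 ≤ ab`,
`1 ≤ ba` and everything `≤ 0`. -/
def badd : B → B → B := fun x y =>
  if x = y then x
  else if (x = B.e ∧ y = B.ab) ∨ (x = B.ab ∧ y = B.e) then B.ab
  else if (x = B.e ∧ y = B.ba) ∨ (x = B.ba ∧ y = B.e) then B.ba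
  else B.z

/-- Evaluate a (nonempty) word in a magma under an assignment. -/
def evalWith {S V : Type*} (mul : S → S → S) (z : S) (φ : V → S) : List V → S
  | [] => z
  | h :: t => t.foldl (fun s v => mul s (φ v)) (φ h)

/-- The word `xyxztz`, with `x, y, z, t` encoded as the variables `0, 1, 2, 3`. -/
def wordXYXZTZ : List ℕ := [0, 1, 0, 2, 3, 2]

/-! ### Auxiliary material -/

instance : Fintype B where
  elems := ⟨[B.z, B.e, B.a, B.b, B.ab, B.ba], by decide⟩
  complete x := by cases x <;> decide

lemma bmul_assoc (x y w : B) : bmul (bmul x y) w = bmul x (bmul y w) := by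
  cases x <;> cases y <;> cases w <;> rfl

lemma e_bmul (x : B) : bmul B.e x = x := by cases x <;> rfl
lemma bmul_e (x : B) : bmul x B.e = x := by cases x <;> rfl
lemma bmul_z (x : B) : bmul x B.z = B.z := by cases x <;> rfl
lemma z_bmul (x : B) : bmul B.z x = B.z := by cases x <;> rfl

lemma foldl_eq (φ : ℕ → B) : ∀ (t : List ℕ) (s : B),
    t.foldl (fun s v => bmul s (φ v)) s = bmul s (evalWith bmul B.e φ t) := by
  intro t
  induction t with
  | nil => intro s; exact (bmul_e s).symm
  | cons h t ih =>
    intro s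
    have hev : evalWith bmul B.e φ (h :: t) = List.foldl (fun s v => bmul s (φ v)) (φ h) t := rfl
    rw [List.foldl_cons, ih, hev, ih, bmul_assoc]

lemma ev_cons (φ : ℕ → B) (h : ℕ) (t : List ℕ) :
    evalWith bmul B.e φ (h :: t) = bmul (φ h) (evalWith bmul B.e φ t) := by
  have hev : evalWith bmul B.e φ (h :: t) = List.foldl (fun s v => bmul s (φ v)) (φ h) t := rfl
  rw [hev, foldl_eq]

lemma ev_append (φ : ℕ → B) (l₁ l₂ : List ℕ) :
    evalWith bmul B.e φ (l₁ ++ l₂) = bmul (evalWith bmul B.e φ l₁) (evalWith bmul B.e φ l₂) := by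
  induction l₁ with
  | nil => simp only [List.nil_append]; exact (e_bmul _).symm
  | cons h t ih => rw [List.cons_append, ev_cons, ih, ev_cons, bmul_assoc]

lemma ev_z (φ : ℕ → B) : ∀ l : List ℕ, (∃ v ∈ l, φ v = B.z) →
    evalWith bmul B.e φ l = B.z := by
  intro l
  induction l with
  | nil => rintro ⟨v, hv, -⟩; cases hv
  | cons h t ih =>
    rintro ⟨v, hv, hz⟩
    rw [ev_cons]
    rcases List.mem_cons.1 hv with rfl | hm
    · rw [hz, z_bmul]
    · rw [ih ⟨v, hm, hz⟩, bmul_z]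

lemma evA (φ : ℕ → B) : ∀ l : List ℕ, (∀ v ∈ l, φ v = B.a ∨ φ v = B.e) →
    (evalWith bmul B.e φ l = B.e ∧ l.countP (fun v => decide (φ v = B.a)) = 0) ∨
    (evalWith bmul B.e φ l = B.a ∧ l.countP (fun v => decide (φ v = B.a)) = 1) ∨
    (evalWith bmul B.e φ l = B.z ∧ 2 ≤ l.countP (fun v => decide (φ v = B.a))) := by
  intro l
  induction l with
  | nil => intro _; exact Or.inl ⟨rfl, rfl⟩
  | cons h t ih =>
    intro hall
    have hh := hall h List.mem_cons_self
    have ht := fun v hv => hall v (List.mem_cons_of_mem h hv)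
    rw [ev_cons, List.countP_cons]
    rcases hh with ha | he
    · rw [ha]
      have hif : (if decide (B.a = B.a) = true then 1 else 0) = 1 := rfl
      rw [hif]
      rcases ih ht with ⟨h1, h2⟩ | ⟨h1, h2⟩ | ⟨h1, h2⟩ <;> rw [h1]
      · exact Or.inr (Or.inl ⟨rfl, by omega⟩)
      · exact Or.inr (Or.inr ⟨rfl, by omega⟩)
      · exact Or.inr (Or.inr ⟨rfl, by omega⟩)
    · rw [he, e_bmul]
      have hif : (if decide (B.e = B.a) = true then 1 else 0) = 0 := rfl
      rw [hif]
      rcases ih ht with ⟨h1, h2⟩ | ⟨h1, h2⟩ | ⟨h1, h2⟩ <;> rw [h1]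
      · exact Or.inl ⟨rfl, by omega⟩
      · exact Or.inr (Or.inl ⟨rfl, by omega⟩)
      · exact Or.inr (Or.inr ⟨rfl, by omega⟩)

lemma countP_eq (φ : ℕ → B) (l : List ℕ) (x : ℕ) (hx : φ x = B.a)
    (hall : ∀ v ∈ l, v = x ∨ φ v ≠ B.a) :
    l.countP (fun v => decide (v = x)) = l.countP (fun v => decide (φ v = B.a)) := by
  refine List.countP_congr (fun v hv => ?_)
  simp only [decide_eq_true_eq]
  constructor
  · rintro rfl; exact hx
  · intro hva
    rcases hall v hv with rfl | hne
    · rfl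
    · exact absurd hva hne

lemma one_count (φ : ℕ → B) (u : List ℕ) (x : ℕ) (hx : φ x = B.a)
    (hall : ∀ v ∈ u, v = x ∨ φ v = B.e)
    (hev : evalWith bmul B.e φ u = B.a) :
    u.countP (fun v => decide (v = x)) = 1 := by
  have hall' : ∀ v ∈ u, φ v = B.a ∨ φ v = B.e := by
    intro v hv
    rcases hall v hv with rfl | he
    · exact Or.inl hx
    · exact Or.inr he
  have hcong := countP_eq φ u x hx (by
    intro v hv
    rcases hall v hv with rfl | he
    · exact Or.inl rfl
    · exact Or.inr (by rw [he]; intro hc; cases hc))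
  rcases evA φ u hall' with ⟨h1, h2⟩ | ⟨h1, h2⟩ | ⟨h1, h2⟩
  · rw [hev] at h1; cases h1
  · rw [hcong, h2]
  · rw [hev] at h1; cases h1

lemma two_count (φ : ℕ → B) (u : List ℕ) (x y : ℕ) (hxy : x ≠ y)
    (hx : φ x = B.a) (hy : φ y = B.b)
    (hall : ∀ v ∈ u, v = x ∨ v = y ∨ φ v = B.e)
    (hcy : u.countP (fun v => decide (v = y)) = 1)
    (hev : evalWith bmul B.e φ u = B.a) :
    u.countP (fun v => decide (v = x)) = 2 := by
  have hmem : y ∈ u := by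
    have hpos : 0 < u.countP (fun v => decide (v = y)) := by omega
    obtain ⟨v, hv, hvy⟩ := List.countP_pos_iff.1 hpos
    simp only [decide_eq_true_eq] at hvy
    exact hvy ▸ hv
  obtain ⟨A, C, rfl⟩ := List.append_of_mem hmem
  rw [List.countP_append, List.countP_cons] at hcy
  simp only [decide_true, if_true] at hcy
  have hA0 : A.countP (fun v => decide (v = y)) = 0 := by omega
  have hC0 : C.countP (fun v => decide (v = y)) = 0 := by omega
  have hAy : ∀ v ∈ A, v ≠ y := by
    intro v hv
    have := List.countP_eq_zero.1 hA0 v hv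
    simpa using this
  have hCy : ∀ v ∈ C, v ≠ y := by
    intro v hv
    have := List.countP_eq_zero.1 hC0 v hv
    simpa using this
  have hallA : ∀ v ∈ A, φ v = B.a ∨ φ v = B.e := by
    intro v hv
    rcases hall v (List.mem_append.2 (Or.inl hv)) with rfl | h' | h'
    · exact Or.inl hx
    · exact absurd h' (hAy v hv)
    · exact Or.inr h'
  have hallC : ∀ v ∈ C, φ v = B.a ∨ φ v = B.e := by
    intro v hv
    rcases hall v (by simp [hv]) with rfl | h' | h'
    · exact Or.inl hx
    · exact absurd h' (hCy v hv)
    · exact Or.inr h'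
  have hcongA := countP_eq φ A x hx (by
    intro v hv
    rcases hallA v hv with ha | he
    · rcases hall v (List.mem_append.2 (Or.inl hv)) with rfl | h' | h'
      · exact Or.inl rfl
      · exact absurd h' (hAy v hv)
      · exact Or.inr (by rw [h']; intro hc; cases hc)
    · exact Or.inr (by rw [he]; intro hc; cases hc))
  have hcongC := countP_eq φ C x hx (by
    intro v hv
    rcases hallC v hv with ha | he
    · rcases hall v (by simp [hv]) with rfl | h' | h'
      · exact Or.inl rfl
      · exact absurd h' (hCy v hv)
      · exact Or.inr (by rw [h']; intro hc; cases hc)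
    · exact Or.inr (by rw [he]; intro hc; cases hc))
  rw [ev_append, ev_cons, hy] at hev
  rw [List.countP_append, List.countP_cons]
  have hyx : (decide (y = x)) = false := by simp [Ne.symm hxy]
  have hif : (if decide (y = x) = true then 1 else 0) = 0 := by rw [hyx]; rfl
  rw [hif]
  rcases evA φ A hallA with ⟨h1, h2⟩ | ⟨h1, h2⟩ | ⟨h1, h2⟩ <;>
    rcases evA φ C hallC with ⟨h3, h4⟩ | ⟨h3, h4⟩ | ⟨h3, h4⟩ <;>
      rw [h1, h3] at hev <;>
        first
          | (exact absurd hev (by decide))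
          | (rw [hcongA, hcongC, h2, h4])

lemma length_eq_counts : ∀ l : List ℕ, (∀ v ∈ l, v < 4) →
    l.length = l.countP (fun v => decide (v = 0)) + l.countP (fun v => decide (v = 1)) +
      l.countP (fun v => decide (v = 2)) + l.countP (fun v => decide (v = 3)) := by
  intro l
  induction l with
  | nil => intro _; rfl
  | cons h t ih =>
    intro h4
    have hh := h4 h List.mem_cons_self
    have ht := ih fun v hv => h4 v (List.mem_cons_of_mem h hv)
    simp only [List.countP_cons, List.length_cons, ht]
    interval_cases h <;> (try simp) <;> omega

def gY : ℕ → B := fun n => if n = 1 then B.a else B.e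
def gT : ℕ → B := fun n => if n = 3 then B.a else B.e
def gXY : ℕ → B := fun n => if n = 0 then B.a else if n = 1 then B.b else B.e
def gZT : ℕ → B := fun n => if n = 2 then B.a else if n = 3 then B.b else B.e
def gP : ℕ → B := fun n =>
  if n = 0 then B.a else if n = 1 then B.b else if n = 2 then B.b else if n = 3 then B.a else B.e
def gQ : ℕ → B := fun n => if n = 1 then B.a else if n = 3 then B.b else B.e
def gZero : ℕ → B := fun n => if n < 4 then B.e else B.z

lemma le_a (v : B) (h : badd v B.a = B.a) : v = B.a := by revert h; revert v; decide

lemma final (p q r s t v : Fin 4)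
    (h1 : badd (evalWith bmul B.e gY [p.1, q.1, r.1, s.1, t.1, v.1])
        (evalWith bmul B.e gY wordXYXZTZ) = evalWith bmul B.e gY wordXYXZTZ)
    (h2 : badd (evalWith bmul B.e gT [p.1, q.1, r.1, s.1, t.1, v.1])
        (evalWith bmul B.e gT wordXYXZTZ) = evalWith bmul B.e gT wordXYXZTZ)
    (h3 : badd (evalWith bmul B.e gXY [p.1, q.1, r.1, s.1, t.1, v.1])
        (evalWith bmul B.e gXY wordXYXZTZ) = evalWith bmul B.e gXY wordXYXZTZ)
    (h4 : badd (evalWith bmul B.e gZT [p.1, q.1, r.1, s.1, t.1, v.1])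
        (evalWith bmul B.e gZT wordXYXZTZ) = evalWith bmul B.e gZT wordXYXZTZ)
    (h5 : badd (evalWith bmul B.e gP [p.1, q.1, r.1, s.1, t.1, v.1])
        (evalWith bmul B.e gP wordXYXZTZ) = evalWith bmul B.e gP wordXYXZTZ)
    (h6 : badd (evalWith bmul B.e gQ [p.1, q.1, r.1, s.1, t.1, v.1])
        (evalWith bmul B.e gQ wordXYXZTZ) = evalWith bmul B.e gQ wordXYXZTZ) :
    ([p.1, q.1, r.1, s.1, t.1, v.1] : List ℕ) = wordXYXZTZ := by
  revert h1 h2 h3 h4 h5 h6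
  revert p q r s t v
  decide

/-- `xyxztz` is an isoterm for `B₂¹`: any word `u` with `u ⪯ xyxztz` in `B₂¹`
(i.e. `B₂¹` satisfies `u + xyxztz ≈ xyxztz`) equals `xyxztz`. -/
theorem stmt16 :
    ∀ u : List ℕ, u ≠ [] →
      (∀ φ : ℕ → B,
        badd (evalWith bmul B.e φ u) (evalWith bmul B.e φ wordXYXZTZ) =
          evalWith bmul B.e φ wordXYXZTZ) →
      u = wordXYXZTZ := by
  intro u hne h
  -- every letter of `u` is `< 4`
  have h4 : ∀ v ∈ u, v < 4 := by
    intro v hv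
    by_contra hge
    have hz : evalWith bmul B.e gZero u = B.z :=
      ev_z gZero u ⟨v, hv, by simp only [gZero]; rw [if_neg (by omega)]⟩
    have hw : evalWith bmul B.e gZero wordXYXZTZ = B.e := by decide
    have := h gZero
    rw [hz, hw] at this
    exact absurd this (by decide)
  -- evaluations under the key assignments
  have hevY : evalWith bmul B.e gY u = B.a := by
    have := h gY
    have hw : evalWith bmul B.e gY wordXYXZTZ = B.a := by decide
    rw [hw] at this
    exact le_a _ this
  have hevT : evalWith bmul B.e gT u = B.a := by
    have := h gT
    have hw : evalWith bmul B.e gT wordXYXZTZ = B.a := by decide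
    rw [hw] at this
    exact le_a _ this
  have hevXY : evalWith bmul B.e gXY u = B.a := by
    have := h gXY
    have hw : evalWith bmul B.e gXY wordXYXZTZ = B.a := by decide
    rw [hw] at this
    exact le_a _ this
  have hevZT : evalWith bmul B.e gZT u = B.a := by
    have := h gZT
    have hw : evalWith bmul B.e gZT wordXYXZTZ = B.a := by decide
    rw [hw] at this
    exact le_a _ this
  -- counts of letters
  have c1 : u.countP (fun v => decide (v = 1)) = 1 := by
    refine one_count gY u 1 rfl ?_ hevY
    intro v _
    by_cases hv1 : v = 1
    · exact Or.inl hv1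
    · exact Or.inr (by simp [gY, hv1])
  have c3 : u.countP (fun v => decide (v = 3)) = 1 := by
    refine one_count gT u 3 rfl ?_ hevT
    intro v _
    by_cases hv3 : v = 3
    · exact Or.inl hv3
    · exact Or.inr (by simp [gT, hv3])
  have c0 : u.countP (fun v => decide (v = 0)) = 2 := by
    refine two_count gXY u 0 1 (by omega) rfl rfl ?_ c1 hevXY
    intro v _
    by_cases hv0 : v = 0
    · exact Or.inl hv0
    by_cases hv1 : v = 1
    · exact Or.inr (Or.inl hv1)
    · exact Or.inr (Or.inr (by simp [gXY, hv0, hv1]))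
  have c2 : u.countP (fun v => decide (v = 2)) = 2 := by
    refine two_count gZT u 2 3 (by omega) rfl rfl ?_ c3 hevZT
    intro v _
    by_cases hv2 : v = 2
    · exact Or.inl hv2
    by_cases hv3 : v = 3
    · exact Or.inr (Or.inl hv3)
    · exact Or.inr (Or.inr (by simp [gZT, hv2, hv3]))
  have hlen : u.length = 6 := by
    rw [length_eq_counts u h4, c0, c1, c2, c3]
  clear hne hevY hevT hevXY hevZT c0 c1 c2 c3
  -- destructure `u` into six letters
  rcases u with - | ⟨x1, - | ⟨x2, - | ⟨x3, - | ⟨x4, - | ⟨x5, - | ⟨x6, rest⟩⟩⟩⟩⟩⟩ <;>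
    simp only [List.length_cons, List.length_nil] at hlen
  · omega
  · omega
  · omega
  · omega
  · omega
  · omega
  · have hrest : rest = [] := List.eq_nil_of_length_eq_zero (by omega)
    subst hrest
    have b1 : x1 < 4 := h4 x1 (by simp)
    have b2 : x2 < 4 := h4 x2 (by simp)
    have b3 : x3 < 4 := h4 x3 (by simp)
    have b4 : x4 < 4 := h4 x4 (by simp)
    have b5 : x5 < 4 := h4 x5 (by simp)
    have b6 : x6 < 4 := h4 x6 (by simp)
    exact final ⟨x1, b1⟩ ⟨x2, b2⟩ ⟨x3, b3⟩ ⟨x4, b4⟩ ⟨x5, b5⟩ ⟨x6, b6⟩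
      (h gY) (h gT) (h gXY) (h gZT) (h gP) (h gQ)
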